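/- Let H : (0,∞) → ℝ be twice differentiable with lim_{t→∞} t·H''(t) = ∞. Then there exists t₁ ≥ 0 such that for every t ≥ t₁ the map θ ↦ G_θ(t) = (H((1+θ)t) − (1+θ)H(t))/θ is nondecreasing on [−1/2, ∞) \ {0}: whenever −1/2 ≤ θ < θ' with θ ≠ 0 and θ' ≠ 0, one has G_θ(t) ≤ G_{θ'}(t). -/

import Mathlib

open Filter

/-- If `H` is twice differentiable on `(0,∞)` with `t · H''(t) → ∞`, then for all large
enough `t`, the cumulant exponent `θ ↦ G_θ(t) = (H((1+θ)t) − (1+θ)H(t))/θ` is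
nondecreasing in `θ` on `[−1/2, ∞) \ {0}`. -/
theorem cumulant_exponent_eventually_monotone_in_theta (H : ℝ → ℝ)
    (h1 : ∀ t : ℝ, 0 < t → DifferentiableAt ℝ H t)
    (h2 : ∀ t : ℝ, 0 < t → DifferentiableAt ℝ (deriv H) t)
    (hlim : Tendsto (fun t : ℝ => t * deriv (deriv H) t) atTop atTop) :
    ∃ t₁ : ℝ, 0 ≤ t₁ ∧ ∀ t : ℝ, t₁ ≤ t →
      ∀ θ θ' : ℝ, -(1/2 : ℝ) ≤ θ → θ < θ' → θ ≠ 0 → θ' ≠ 0 →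
        (H ((1 + θ) * t) - (1 + θ) * H t) / θ ≤ (H ((1 + θ') * t) - (1 + θ') * H t) / θ' := by
  obtain ⟨T, hT⟩ := eventually_atTop.mp (hlim.eventually_ge_atTop 0)
  refine ⟨2 * max T 1, by positivity, ?_⟩
  intro t ht θ θ' hθhalf hθθ' hθ0 hθ'0
  have hT1 : (1 : ℝ) ≤ max T 1 := le_max_right T 1
  have ht2 : (2 : ℝ) ≤ t := le_trans (by nlinarith) ht
  have ht0 : (0 : ℝ) < t := by linarith
  -- positivity of (1+θ)*t for θ ≥ -1/2
  have key : ∀ θ : ℝ, -(1/2 : ℝ) ≤ θ → max T 1 ≤ (1 + θ) * t := by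
    intro θ hθ
    have : t / 2 ≤ (1 + θ) * t := by nlinarith
    have : max T 1 ≤ t / 2 := by linarith
    linarith [show t / 2 ≤ (1 + θ) * t by nlinarith]
  have pos : ∀ θ : ℝ, -(1/2 : ℝ) ≤ θ → 0 < (1 + θ) * t := by
    intro θ hθ
    have := key θ hθ
    linarith
  -- The function F
  set F : ℝ → ℝ := fun θ => H ((1 + θ) * t) - (1 + θ) * H t with hF
  set F' : ℝ → ℝ := fun θ => deriv H ((1 + θ) * t) * t - H t with hF'
  have hderiv : ∀ θ : ℝ, -(1/2 : ℝ) ≤ θ → HasDerivAt F (F' θ) θ := by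
    intro θ hθ
    have hg : HasDerivAt (fun θ : ℝ => (1 + θ) * t) t θ := by
      simpa using ((hasDerivAt_id θ).const_add 1).mul_const t
    have hH : HasDerivAt H (deriv H ((1 + θ) * t)) ((1 + θ) * t) :=
      (h1 _ (pos θ hθ)).hasDerivAt
    have hc : HasDerivAt (fun θ : ℝ => H ((1 + θ) * t))
        (deriv H ((1 + θ) * t) * t) θ := hH.comp θ hg
    have hl : HasDerivAt (fun θ : ℝ => (1 + θ) * H t) (H t) θ := by
      simpa using ((hasDerivAt_id θ).const_add 1).mul_const (H t)
    exact hc.sub hl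
  have hderiv2 : ∀ θ : ℝ, -(1/2 : ℝ) ≤ θ →
      HasDerivAt F' (deriv (deriv H) ((1 + θ) * t) * t * t) θ := by
    intro θ hθ
    have hg : HasDerivAt (fun θ : ℝ => (1 + θ) * t) t θ := by
      simpa using ((hasDerivAt_id θ).const_add 1).mul_const t
    have hH2 : HasDerivAt (deriv H) (deriv (deriv H) ((1 + θ) * t)) ((1 + θ) * t) :=
      (h2 _ (pos θ hθ)).hasDerivAt
    have hc : HasDerivAt (fun θ : ℝ => deriv H ((1 + θ) * t))
        (deriv (deriv H) ((1 + θ) * t) * t) θ := by have := hH2.comp θ hg; exact this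
    exact (hc.mul_const t).sub_const (H t)
  have hconv : ConvexOn ℝ (Set.Ici (-(1/2 : ℝ))) F := by
    apply convexOn_of_hasDerivWithinAt2_nonneg (f' := F')
      (f'' := fun θ => deriv (deriv H) ((1 + θ) * t) * t * t) (convex_Ici _)
    · intro θ hθ
      exact (hderiv θ hθ).continuousAt.continuousWithinAt
    · intro θ hθ
      rw [interior_Ici] at hθ
      exact (hderiv θ (le_of_lt hθ)).hasDerivWithinAt
    · intro θ hθ
      rw [interior_Ici] at hθ
      exact (hderiv2 θ (le_of_lt hθ)).hasDerivWithinAt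
    · intro θ hθ
      rw [interior_Ici] at hθ
      have hθ' : -(1/2 : ℝ) ≤ θ := le_of_lt hθ
      have hs := key θ hθ'
      have hspos := pos θ hθ'
      have h0 : 0 ≤ (1 + θ) * t * deriv (deriv H) ((1 + θ) * t) :=
        hT _ (le_trans (le_max_left T 1) hs)
      have : 0 ≤ deriv (deriv H) ((1 + θ) * t) := nonneg_of_mul_nonneg_right h0 hspos
      positivity
  have hmem : ∀ θ : ℝ, -(1/2 : ℝ) ≤ θ → θ ∈ Set.Ici (-(1/2 : ℝ)) := fun _ h => h
  have h0mem : (0 : ℝ) ∈ Set.Ici (-(1/2 : ℝ)) := by norm_num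
  have hsec := hconv.secant_mono h0mem (hmem θ hθhalf)
    (hmem θ' (le_trans hθhalf (le_of_lt hθθ'))) hθ0 hθ'0 (le_of_lt hθθ')
  have hF0 : F 0 = 0 := by simp [hF]
  simpa [hF, hF0] using hsec
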